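/- If M is an irreducible integer matrix (its characteristic polynomial is irreducible over ℚ) with a positive left eigenvector ω for a real eigenvalue λ, then the entries of ω are linearly independent over ℚ; in particular, for distinct standard basis vectors e_a, e_b, the numbers ⟨e_a,ω⟩ = ω_a and ⟨e_b,ω⟩ = ω_b are independent over ℚ. -/

import Mathlib

open Polynomial Matrix

/-- Auxiliary: mulVec of a finite sum of matrices. -/
lemma aux_sum_mulVec {k : ℕ} {ι : Type*} (s : Finset ι) (f : ι → Matrix (Fin k) (Fin k) ℚ)
    (q : Fin k → ℚ) : (∑ n ∈ s, f n) *ᵥ q = ∑ n ∈ s, (f n) *ᵥ q := by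
  classical
  induction s using Finset.induction_on with
  | empty => simp [Matrix.zero_mulVec]
  | insert _ _ h ih => simp [Finset.sum_insert h, Matrix.add_mulVec, ih]

/-- if M is an integer matrix with characteristic polynomial
irreducible over ℚ and ω is a positive left eigenvector for a real eigenvalue λ,
then the entries of ω are ℚ-linearly independent; in particular for a ≠ b,
ω_a and ω_b are independent over ℚ. -/
theorem stmt_5 {k : ℕ} (M : Matrix (Fin k) (Fin k) ℤ)
    (hirr : Irreducible (Matrix.charpoly (M.map ((↑) : ℤ → ℚ))))
    (ω : Fin k → ℝ) (hpos : ∀ i, 0 < ω i) (lam : ℝ)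
    (heig : ∀ j, (∑ i, ω i * (M i j : ℝ)) = lam * ω j) :
    (∀ q : Fin k → ℚ, (∑ i, (q i : ℝ) * ω i) = 0 → q = 0) ∧
    (∀ a b : Fin k, a ≠ b →
      ∀ r s : ℚ, (r : ℝ) * ω a + (s : ℝ) * ω b = 0 → r = 0 ∧ s = 0) := by
  classical
  set A : Matrix (Fin k) (Fin k) ℚ := M.map ((↑) : ℤ → ℚ) with hAdef
  -- the linear functional
  set L : (Fin k → ℚ) → ℝ := fun x => ∑ i, (x i : ℝ) * ω i with hLdef
  -- L is compatible with mulVec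
  have hLmul : ∀ x : Fin k → ℚ, L (A *ᵥ x) = lam * L x := by
    intro x
    have : L (A *ᵥ x) = ∑ j, ∑ i, (x i : ℝ) * (ω j * (M j i : ℝ)) := by
      simp only [hLdef, Matrix.mulVec, dotProduct, hAdef, Matrix.map_apply]
      push_cast
      refine Finset.sum_congr rfl fun j _ => ?_
      rw [Finset.sum_mul]
      refine Finset.sum_congr rfl fun i _ => ?_
      ring
    rw [this, Finset.sum_comm, hLdef]
    simp only [Finset.mul_sum]
    refine Finset.sum_congr rfl fun i _ => ?_
    rw [← Finset.mul_sum, heig i]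
    ring
  -- k is positive
  have hk : 0 < k := by
    by_contra h
    push_neg at h
    interval_cases k
    have h1 : A.charpoly = 1 := by
      have := A.charpoly_monic
      have h0 : A.charpoly.natDegree = 0 := by
        rw [A.charpoly_natDegree_eq_dim, Fintype.card_fin]
      exact (Polynomial.Monic.natDegree_eq_zero this).mp h0
    rw [h1] at hirr
    exact hirr.not_isUnit isUnit_one
  -- main statement
  have key : ∀ q : Fin k → ℚ, (∑ i, (q i : ℝ) * ω i) = 0 → q = 0 := by
    intro q hq
    by_contra hq0
    -- the orbit vectors
    set v : ℕ → (Fin k → ℚ) := fun n => (A ^ n) *ᵥ q with hvdef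
    have hvmem : ∀ n, L (v n) = 0 := by
      intro n
      induction n with
      | zero => simpa [hvdef, Matrix.one_mulVec] using hq
      | succ n ih =>
        have : v (n + 1) = A *ᵥ (v n) := by
          rw [hvdef]; simp only [pow_succ']
          rw [← Matrix.mulVec_mulVec]
        rw [this, hLmul, ih, mul_zero]
    -- annihilation by a low-degree polynomial kills q
    have hkill : ∀ p : ℚ[X], p ≠ 0 → p.natDegree < k → (aeval A p) *ᵥ q ≠ 0 := by
      intro p hp hdeg habs
      have hdvd : ¬ A.charpoly ∣ p := by
        intro hdvd
        have := Polynomial.natDegree_le_of_dvd hdvd hp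
        rw [A.charpoly_natDegree_eq_dim] at this
        simp at this
        omega
      have hcop : IsCoprime A.charpoly p := hirr.coprime_iff_not_dvd.mpr hdvd
      obtain ⟨u, w, huw⟩ := hcop
      have h1 : (aeval A (u * A.charpoly + w * p)) *ᵥ q = q := by
        rw [huw]; simp [Matrix.one_mulVec]
      have h2 : (aeval A (u * A.charpoly + w * p)) *ᵥ q = 0 := by
        rw [map_add, _root_.map_mul, _root_.map_mul, Matrix.add_mulVec,
          ← Matrix.mulVec_mulVec, ← Matrix.mulVec_mulVec,
          A.aeval_self_charpoly, Matrix.zero_mulVec, Matrix.mulVec_zero,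
          habs, Matrix.mulVec_zero, add_zero]
      exact hq0 (h1 ▸ h2)
    -- the orbit vectors v 0, ..., v (k-1) are linearly independent
    have li : LinearIndependent ℚ (fun n : Fin k => v n) := by
      rw [Fintype.linearIndependent_iff]
      intro c hc
      by_contra hcne
      push_neg at hcne
      obtain ⟨n0, hn0⟩ := hcne
      set p : ℚ[X] := ∑ n : Fin k, Polynomial.C (c n) * Polynomial.X ^ (n : ℕ) with hpdef
      have hpr : ∀ m : Fin k, p.coeff (m : ℕ) = c m := by
        intro m
        rw [hpdef]
        rw [Polynomial.finset_sum_coeff]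
        simp only [Polynomial.coeff_C_mul, Polynomial.coeff_X_pow]
        rw [Finset.sum_eq_single m]
        · simp
        · intro n _ hne
          have : (n : ℕ) ≠ (m : ℕ) := fun h => hne (Fin.ext h)
          simp [Ne.symm this]
        · simp
      have hpne : p ≠ 0 := by
        intro h
        apply hn0
        have := hpr n0
        rw [h] at this
        simpa using this.symm
      have hpdeg : p.natDegree < k := by
        have : p.natDegree ≤ k - 1 := by
          rw [hpdef]
          refine Polynomial.natDegree_sum_le_of_forall_le _ _ fun n _ => ?_
          refine (Polynomial.natDegree_C_mul_le _ _).trans ?_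
          rw [Polynomial.natDegree_X_pow]
          omega
        omega
      refine hkill p hpne hpdeg ?_
      have : aeval A p = ∑ n : Fin k, c n • A ^ (n : ℕ) := by
        rw [hpdef, map_sum]
        refine Finset.sum_congr rfl fun n _ => ?_
        rw [_root_.map_mul, Polynomial.aeval_C, Polynomial.aeval_X_pow,
          ← Algebra.smul_def]
      rw [this, aux_sum_mulVec]
      rw [← hc]
      refine Finset.sum_congr rfl fun n _ => ?_
      rw [Matrix.smul_mulVec]
    -- hence they span
    have hspan : Submodule.span ℚ (Set.range fun n : Fin k => v n) = ⊤ := by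
      have : Nonempty (Fin k) := ⟨⟨0, hk⟩⟩
      refine li.span_eq_top_of_card_eq_finrank ?_
      simp [Module.finrank_fintype_fun_eq_card]
    -- so every vector is killed by L, in particular a basis vector, contradiction
    have hWsub : ∀ x : Fin k → ℚ, L x = 0 := by
      intro x
      -- L as a linear map
      let L' : (Fin k → ℚ) →ₗ[ℚ] ℝ :=
        { toFun := L
          map_add' := by
            intro a b
            simp only [hLdef, Pi.add_apply, Rat.cast_add, add_mul, Finset.sum_add_distrib]
          map_smul' := by
            intro c a
            simp only [hLdef, Pi.smul_apply, smul_eq_mul, Rat.cast_mul, RingHom.id_apply,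
              Rat.smul_def, Finset.mul_sum, mul_assoc] }
      have hxmem : x ∈ Submodule.span ℚ (Set.range fun n : Fin k => v n) := by
        rw [hspan]; trivial
      have : Submodule.span ℚ (Set.range fun n : Fin k => v n) ≤ LinearMap.ker L' := by
        rw [Submodule.span_le]
        rintro y ⟨n, rfl⟩
        exact hvmem n
      exact this hxmem
    have := hWsub (Pi.single ⟨0, hk⟩ 1)
    rw [hLdef] at this
    simp only [Pi.single_apply] at this
    rw [Finset.sum_eq_single (⟨0, hk⟩ : Fin k)] at this
    · simp at this
      exact absurd this (ne_of_gt (hpos ⟨0, hk⟩))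
    · intro n _ hne; simp [hne]
    · simp
  refine ⟨key, ?_⟩
  intro a b hab r s hrs
  set q : Fin k → ℚ := fun i => if i = a then r else if i = b then s else 0 with hqdef
  have hsum : (∑ i, (q i : ℝ) * ω i) = 0 := by
    have : ∀ i, (q i : ℝ) * ω i =
        (if i = a then (r : ℝ) * ω a else 0) + (if i = b then (s : ℝ) * ω b else 0) := by
      intro i
      rw [hqdef]
      by_cases h1 : i = a
      · subst h1
        simp [hab]
      · by_cases h2 : i = b
        · subst h2; simp [h1]
        · simp [h1, h2]
    rw [Finset.sum_congr rfl fun i _ => this i, Finset.sum_add_distrib]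
    simp [hrs]
  have hq0 := key q hsum
  have ha : q a = 0 := by rw [hq0]; rfl
  have hb : q b = 0 := by rw [hq0]; rfl
  rw [hqdef] at ha hb
  simp at ha
  simp [Ne.symm hab] at hb
  exact ⟨ha, hb⟩
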